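/- If T is a tree whose locally irregular chromatic index equals 3, then every vertex of maximum degree in T has a neighbor of the same (maximum) degree. -/

import Mathlib

namespace LocIrrAux

open SimpleGraph Walk

section Graph

variable {V : Type*} [DecidableEq V] {G : SimpleGraph V}

open SimpleGraph Walk

variable {V : Type*} [DecidableEq V] {G : SimpleGraph V}

theorem path_length_eq_dist (hT : G.IsTree) {x y : V} (p : G.Walk x y)
    (hp : p.IsPath) : p.length = G.dist x y := by
  obtain ⟨q, hq⟩ := hT.isConnected.exists_walk_length_eq_dist x y
  have hqp := q.isPath_of_length_eq_dist hq
  rw [(hT.existsUnique_path x y).unique hp hqp, hq]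

theorem level (hT : G.IsTree) (v : V) {x y : V} (hadj : G.Adj x y) :
    G.dist v x ≠ G.dist v y := by
  intro heq
  obtain ⟨p, hplen⟩ := hT.isConnected.exists_walk_length_eq_dist v x
  have hp := p.isPath_of_length_eq_dist hplen
  by_cases hy : y ∈ p.support
  · have h1 : (p.takeUntil y hy).IsPath := hp.takeUntil hy
    have hl1 : (p.takeUntil y hy).length = G.dist v y := path_length_eq_dist hT _ h1
    have hsplit : ((p.takeUntil y hy).append (p.dropUntil y hy)).length = p.length := by
      rw [p.take_spec hy]
    rw [Walk.length_append] at hsplit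
    have hzero : (p.dropUntil y hy).length = 0 := by omega
    exact hadj.ne (Walk.eq_of_length_eq_zero hzero).symm
  · have hyr : y ∉ p.reverse.support := by
      rw [Walk.support_reverse, List.mem_reverse]; exact hy
    have hcons : (Walk.cons hadj.symm p.reverse).IsPath := hp.reverse.cons hyr
    have hlen := path_length_eq_dist hT _ hcons
    rw [Walk.length_cons, Walk.length_reverse] at hlen
    have e1 : G.dist y v = G.dist v y := dist_comm
    omega

theorem parent_exists (hT : G.IsTree) {v w : V} (h : w ≠ v) :
    ∃ u, G.Adj w u ∧ G.dist v u + 1 = G.dist v w := by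
  obtain ⟨p, hplen⟩ := hT.isConnected.exists_walk_length_eq_dist w v
  have hp := p.isPath_of_length_eq_dist hplen
  cases p with
  | nil => exact absurd rfl h
  | @cons _ u _ hadj q =>
    refine ⟨u, hadj, ?_⟩
    have hq : q.IsPath := hp.of_cons
    have hql : q.length = G.dist u v := path_length_eq_dist hT q hq
    rw [Walk.length_cons] at hplen
    have e1 : G.dist v u = G.dist u v := dist_comm
    have e2 : G.dist v w = G.dist w v := dist_comm
    omega

theorem parent_unique (hT : G.IsTree) {v w u1 u2 : V} (h1 : G.Adj w u1)
    (hd1 : G.dist v u1 + 1 = G.dist v w) (h2 : G.Adj w u2)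
    (hd2 : G.dist v u2 + 1 = G.dist v w) : u1 = u2 := by
  have build : ∀ (u : V), G.Adj w u → G.dist v u + 1 = G.dist v w →
      ∃ r : G.Walk w v, r.IsPath ∧ r.getVert 1 = u := by
    intro u hadj hd
    obtain ⟨q, hqlen⟩ := hT.isConnected.exists_walk_length_eq_dist u v
    have hq := q.isPath_of_length_eq_dist hqlen
    have hwq : w ∉ q.support := by
      intro hmem
      have hsplit : ((q.takeUntil w hmem).append (q.dropUntil w hmem)).length = q.length := by
        rw [q.take_spec hmem]
      rw [Walk.length_append] at hsplit
      have hdl := SimpleGraph.dist_le (q.dropUntil w hmem)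
      have e1 : G.dist w v = G.dist v w := dist_comm
      have e2 : G.dist u v = G.dist v u := dist_comm
      omega
    exact ⟨Walk.cons hadj q, hq.cons hwq, (Walk.getVert_cons_succ (n := 0) q hadj).trans q.getVert_zero⟩
  obtain ⟨r1, hr1, hg1⟩ := build u1 h1 hd1
  obtain ⟨r2, hr2, hg2⟩ := build u2 h2 hd2
  rw [← hg1, ← hg2, (hT.existsUnique_path w v).unique hr1 hr2]

theorem dist_lt_card [Fintype V] (hT : G.IsTree) (v x : V) :
    G.dist v x < Fintype.card V := by
  obtain ⟨p, hplen⟩ := hT.isConnected.exists_walk_length_eq_dist v x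
  have hp := p.isPath_of_length_eq_dist hplen
  rw [← hplen]
  exact hp.length_lt

end Graph

section Abstract

variable {V : Type*} [DecidableEq V]

def Aset (C : V → Finset V) (ht : V → ℕ)
    (hdec : ∀ ⦃u w⦄, w ∈ C u → ht w < ht u) (u : V) : Set ℕ :=
  {δ | 1 ≤ δ ∧ δ ≤ (C u).card + 1 ∧
    ∃ S : Finset V, S ⊆ C u ∧ S.card + 1 = δ ∧
    ∃ dv : V → ℕ,
      (∀ w, ∀ _ : w ∈ C u, dv w ∈ Aset C ht hdec w) ∧
      (∀ w ∈ S, dv w ≠ δ) ∧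
      (∀ w ∈ C u, w ∉ S → dv w ≠ (C u).card + 1 - δ)}
termination_by ht u
decreasing_by exact hdec ‹_›

theorem Aset_eq (C : V → Finset V) (ht : V → ℕ)
    (hdec : ∀ ⦃u w⦄, w ∈ C u → ht w < ht u) (u : V) :
    Aset C ht hdec u =
  {δ | 1 ≤ δ ∧ δ ≤ (C u).card + 1 ∧
    ∃ S : Finset V, S ⊆ C u ∧ S.card + 1 = δ ∧
    ∃ dv : V → ℕ,
      (∀ w, ∀ _ : w ∈ C u, dv w ∈ Aset C ht hdec w) ∧
      (∀ w ∈ S, dv w ≠ δ) ∧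
      (∀ w ∈ C u, w ∉ S → dv w ≠ (C u).card + 1 - δ)} := by
  rw [Aset]

def Cond (m : ℕ) (b : ℕ → ℕ) (δ : ℕ) : Prop :=
  1 ≤ δ ∧ δ ≤ m + 1 ∧ b (m + 1 - δ) ≤ δ - 1 ∧ b δ ≤ m + 1 - δ ∧
    (2 * δ = m + 1 → b δ = 0)

theorem arith (m : ℕ) (b : ℕ → ℕ) (hb0 : b 0 = 0) (hb5 : ∀ t, 5 ≤ t → b t = 0)
    (hsum : b 1 + b 2 + b 3 + b 4 ≤ m) :
    ∃ δ δ', Cond m b δ ∧ Cond m b δ' ∧ (δ ≤ 4 ∨ δ ≠ δ') := by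
  by_cases h5 : 5 ≤ m
  · have hc1 : Cond m b (m + 1) := by
      refine ⟨by omega, le_refl _, ?_, ?_, by omega⟩
      · simp only [Nat.sub_self, hb0]; omega
      · rw [hb5 (m+1) (by omega)]; omega
    by_cases hb1 : b 1 ≤ m - 1
    · refine ⟨m, m + 1, ?_, hc1, Or.inr (by omega)⟩
      have e1 : m + 1 - m = 1 := by omega
      refine ⟨by omega, by omega, ?_, ?_, by omega⟩
      · rw [e1]; omega
      · rw [hb5 m (by omega)]; omega
    · have hb1' : b 1 = m := by omega
      refine ⟨m - 1, m + 1, ?_, hc1, Or.inr (by omega)⟩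
      have e1 : m + 1 - (m - 1) = 2 := by omega
      have e2 : b (m - 1) = 0 := by
        rcases Nat.lt_or_ge (m-1) 5 with h | h
        · have : m - 1 = 4 ∨ 5 ≤ m - 1 := by omega
          rcases this with h' | h'
          · rw [h']; omega
          · exact hb5 _ h'
        · exact hb5 _ h
      refine ⟨by omega, by omega, ?_, ?_, by omega⟩
      · rw [e1]; omega
      · rw [e2]; omega
  · obtain rfl|rfl|rfl|rfl|rfl : m = 0 ∨ m = 1 ∨ m = 2 ∨ m = 3 ∨ m = 4 := by omega
    · exact ⟨1, 1, by unfold Cond; norm_num <;> omega,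
        by unfold Cond; norm_num <;> omega, Or.inl (by omega)⟩
    · by_cases hb2 : b 2 = 0
      · exact ⟨2, 2, by unfold Cond; norm_num <;> omega,
          by unfold Cond; norm_num <;> omega, Or.inl (by omega)⟩
      · exact ⟨1, 1, by unfold Cond; norm_num <;> omega,
          by unfold Cond; norm_num <;> omega, Or.inl (by omega)⟩
    · by_cases hb3 : b 3 = 0
      · exact ⟨3, 3, by unfold Cond; norm_num <;> omega,
          by unfold Cond; norm_num <;> omega, Or.inl (by omega)⟩
      · exact ⟨2, 2, by unfold Cond; norm_num <;> omega,
          by unfold Cond; norm_num <;> omega, Or.inl (by omega)⟩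
    · by_cases hb4 : b 4 = 0
      · exact ⟨4, 4, by unfold Cond; norm_num <;> omega,
          by unfold Cond; norm_num <;> omega, Or.inl (by omega)⟩
      · by_cases hb3 : b 3 ≤ 1
        · exact ⟨3, 3, by unfold Cond; norm_num <;> omega,
            by unfold Cond; norm_num <;> omega, Or.inl (by omega)⟩
        · exact ⟨2, 2, by unfold Cond; norm_num <;> omega,
            by unfold Cond; norm_num <;> omega, Or.inl (by omega)⟩
    · by_cases hb4 : b 4 = 0
      · exact ⟨1, 1, by unfold Cond; norm_num <;> omega,
          by unfold Cond; norm_num <;> omega, Or.inl (by omega)⟩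
      · by_cases h41 : b 4 ≤ 1 ∧ b 1 ≤ 3
        · exact ⟨4, 4, by unfold Cond; norm_num <;> omega,
            by unfold Cond; norm_num <;> omega, Or.inl (by omega)⟩
        · exact ⟨3, 3, by unfold Cond; norm_num <;> omega,
            by unfold Cond; norm_num <;> omega, Or.inl (by omega)⟩

variable {C : V → Finset V} {ht : V → ℕ} {hdec : ∀ ⦃u w⦄, w ∈ C u → ht w < ht u}
  {p : V → V}


/-- Invariant: the achievable set is nonempty, and if it is a singleton its value is ≤ 4. -/
def Inv (C : V → Finset V) (ht : V → ℕ)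
    (hdec : ∀ ⦃u w⦄, w ∈ C u → ht w < ht u) (u : V) : Prop :=
  (∃ δ ∈ Aset C ht hdec u, δ ≤ 4) ∨
    (∃ δ δ', δ ∈ Aset C ht hdec u ∧ δ' ∈ Aset C ht hdec u ∧ δ ≠ δ')

theorem inv_nonempty {u : V} (h : Inv C ht hdec u) : (Aset C ht hdec u).Nonempty := by
  rcases h with ⟨δ, hδ, _⟩ | ⟨δ, _, hδ, _, _⟩ <;> exact ⟨δ, hδ⟩

theorem key1_step (u : V) (IH : ∀ w ∈ C u, Inv C ht hdec w) : Inv C ht hdec u := by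
  classical
  set m := (C u).card with hm
  set Bad : ℕ → Finset V := fun t => (C u).filter (fun w => Aset C ht hdec w ⊆ {t})
    with hBad
  have hBadsub : ∀ t, Bad t ⊆ C u := fun t => Finset.filter_subset _ _
  have hBadmem : ∀ t w, w ∈ Bad t → Aset C ht hdec w = {t} := by
    intro t w hw
    rw [Finset.mem_filter] at hw
    exact (Set.Nonempty.subset_singleton_iff (inv_nonempty (IH w hw.1))).1 hw.2
  have hApos : ∀ w δ, δ ∈ Aset C ht hdec w → 1 ≤ δ ∧ δ ≤ (C w).card + 1 := by
    intro w δ hδ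
    rw [Aset_eq] at hδ
    exact ⟨hδ.1, hδ.2.1⟩
  have hb0 : (Bad 0).card = 0 := by
    rw [Finset.card_eq_zero, Finset.eq_empty_iff_forall_notMem]
    intro w hw
    have h0 : (0:ℕ) ∈ Aset C ht hdec w := by rw [hBadmem 0 w hw]; rfl
    exact absurd (hApos w 0 h0).1 (by omega)
  have hb5 : ∀ t, 5 ≤ t → (Bad t).card = 0 := by
    intro t ht5
    rw [Finset.card_eq_zero, Finset.eq_empty_iff_forall_notMem]
    intro w hw
    have hAw := hBadmem t w hw
    rcases IH w (hBadsub t hw) with ⟨δ, hδ, h4⟩ | ⟨δ, δ', hδ, hδ', hne⟩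
    · rw [hAw] at hδ; rw [hδ] at h4; omega
    · rw [hAw] at hδ hδ'; rw [Set.mem_singleton_iff] at hδ hδ'
      exact hne (hδ.trans hδ'.symm)
  have hdisj : ∀ t t', t ≠ t' → Disjoint (Bad t) (Bad t') := by
    intro t t' hne
    rw [Finset.disjoint_left]
    intro w hw hw'
    have h1 := hBadmem t w hw
    have h2 := hBadmem t' w hw'
    rw [h1] at h2
    exact hne (Set.singleton_eq_singleton_iff.1 h2)
  have hsum : (Bad 1).card + (Bad 2).card + (Bad 3).card + (Bad 4).card ≤ m := by
    have d12 : Disjoint (Bad 1) (Bad 2) := hdisj 1 2 (by omega)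
    have d34 : Disjoint (Bad 3) (Bad 4) := hdisj 3 4 (by omega)
    have d1234 : Disjoint (Bad 1 ∪ Bad 2) (Bad 3 ∪ Bad 4) := by
      rw [Finset.disjoint_union_left, Finset.disjoint_union_right,
        Finset.disjoint_union_right]
      exact ⟨⟨hdisj 1 3 (by omega), hdisj 1 4 (by omega)⟩,
        ⟨hdisj 2 3 (by omega), hdisj 2 4 (by omega)⟩⟩
    calc (Bad 1).card + (Bad 2).card + (Bad 3).card + (Bad 4).card
        = ((Bad 1 ∪ Bad 2) ∪ (Bad 3 ∪ Bad 4)).card := by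
          rw [Finset.card_union_of_disjoint d1234, Finset.card_union_of_disjoint d12,
            Finset.card_union_of_disjoint d34]
          ring
      _ ≤ m := Finset.card_le_card (by
          intro x hx
          rcases Finset.mem_union.1 hx with h | h
          · rcases Finset.mem_union.1 h with h | h
            · exact hBadsub 1 h
            · exact hBadsub 2 h
          · rcases Finset.mem_union.1 h with h | h
            · exact hBadsub 3 h
            · exact hBadsub 4 h)
  have crit : ∀ δ, Cond m (fun t => (Bad t).card) δ → δ ∈ Aset C ht hdec u := by
    rintro δ ⟨h1, h2, h3, h4, h5⟩
    dsimp only at h3 h4 h5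
    have hBsub : Bad (m + 1 - δ) ⊆ C u \ Bad δ := by
      intro w hw
      rw [Finset.mem_sdiff]
      refine ⟨hBadsub _ hw, ?_⟩
      by_cases he : m + 1 - δ = δ
      · have h2δ : 2 * δ = m + 1 := by omega
        have hc0 := h5 h2δ
        rw [Finset.card_eq_zero] at hc0
        intro hw'
        rw [he, hc0] at hw
        exact absurd hw (Finset.notMem_empty w)
      · exact fun hw' => Finset.disjoint_left.1 (hdisj _ _ he) hw hw'
    have hcd : δ - 1 ≤ (C u \ Bad δ).card := by
      rw [Finset.card_sdiff_of_subset (hBadsub δ)]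
      omega
    obtain ⟨S, hS1, hS2, hS3⟩ := Finset.exists_subsuperset_card_eq hBsub (by omega) hcd
    have hSC : S ⊆ C u := hS2.trans (Finset.sdiff_subset)
    have hch : ∀ w : V, ∃ x : ℕ, w ∈ C u →
        (x ∈ Aset C ht hdec w ∧ (w ∈ S → x ≠ δ) ∧ (w ∉ S → x ≠ m + 1 - δ)) := by
      intro w
      by_cases hw : w ∈ C u
      · by_cases hwS : w ∈ S
        · have hnb : w ∉ Bad δ := (Finset.mem_sdiff.1 (hS2 hwS)).2
          have hns : ¬ (Aset C ht hdec w ⊆ {δ}) := fun h =>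
            hnb (Finset.mem_filter.2 ⟨hw, h⟩)
          obtain ⟨x, hx, hxne⟩ := Set.not_subset.1 hns
          exact ⟨x, fun _ => ⟨hx, fun _ => fun hc => hxne (by rw [hc]; rfl),
            fun h => absurd hwS h⟩⟩
        · have hnb : w ∉ Bad (m + 1 - δ) := fun h => hwS (hS1 h)
          have hns : ¬ (Aset C ht hdec w ⊆ {m + 1 - δ}) := fun h =>
            hnb (Finset.mem_filter.2 ⟨hw, h⟩)
          obtain ⟨x, hx, hxne⟩ := Set.not_subset.1 hns
          exact ⟨x, fun _ => ⟨hx, fun h => absurd h hwS,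
            fun _ => fun hc => hxne (by rw [hc]; rfl)⟩⟩
      · exact ⟨0, fun h => absurd h hw⟩
    choose dv hdv using hch
    rw [Aset_eq]
    refine ⟨h1, h2, S, hSC, by omega, dv, ?_, ?_, ?_⟩
    · exact fun w hw => (hdv w hw).1
    · exact fun w hw => (hdv w (hSC hw)).2.1 hw
    · exact fun w hw hws => (hdv w hw).2.2 hws
  obtain ⟨δ, δ', hc, hc', hor⟩ := arith m (fun t => (Bad t).card) hb0 hb5 hsum
  rcases hor with h4 | hne
  · exact Or.inl ⟨δ, crit δ hc, h4⟩
  · exact Or.inr ⟨δ, δ', crit δ hc, crit δ' hc', hne⟩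

theorem key1 (u : V) : Inv C ht hdec u := by
  suffices H : ∀ n u, ht u ≤ n → Inv C ht hdec u from H (ht u) u le_rfl
  intro n
  induction n with
  | zero => exact fun u hu => key1_step u (fun w hw => absurd (hdec hw) (by omega))
  | succ n ih =>
    exact fun u hu => key1_step u (fun w hw => ih w (by have := hdec hw; omega))
/-- Planned color-degree of `w` : up-edge contribution plus same-colored children. -/
def pdeg (C : V → Finset V) (f : V → Fin 2) (γ : Fin 2) (w : V) : ℕ :=
  (if f w = γ then 1 else 0) + ((C w).filter (fun x => f x = γ)).card

/-- `D` is a well-formed subtree domain rooted at `u`. -/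
def GoodD (C : V → Finset V) (ht : V → ℕ) (p : V → V) (u : V) (D : Finset V) : Prop :=
  u ∈ D ∧ (∀ x ∈ D, ht x ≤ ht u) ∧ (∀ x ∈ D, x ≠ u → p x ∈ D ∧ x ∈ C (p x)) ∧
    (∀ x ∈ D, ∀ y ∈ C x, y ∈ D)


theorem fin2_succ_ne : ∀ c : Fin 2, c + 1 ≠ c := by decide

def Key2Concl (C : V → Finset V) (ht : V → ℕ) (p : V → V) (u : V) (δ : ℕ) (c : Fin 2) :
    Prop :=
  ∃ (D : Finset V) (f : V → Fin 2),
    GoodD C ht p u D ∧ f u = c ∧ pdeg C f c u = δ ∧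
    ∀ w ∈ D, ∀ x ∈ C w, pdeg C f (f x) w ≠ pdeg C f (f x) x

theorem key2_step (hp : ∀ ⦃u w⦄, w ∈ C u → p w = u) (u : V)
    (IH : ∀ w ∈ C u, ∀ δ ∈ Aset C ht hdec w, ∀ c : Fin 2, Key2Concl C ht p w δ c)
    {δ : ℕ} (hδ : δ ∈ Aset C ht hdec u) (c : Fin 2) : Key2Concl C ht p u δ c := by
  classical
  rw [Aset_eq] at hδ
  obtain ⟨h1, h2, S, hSC, hScard, dv, hdvA, hdvS, hdvN⟩ := hδ
  have HC : ∀ w : V, ∃ (Dw : Finset V) (fw : V → Fin 2), w ∈ C u →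
      (GoodD C ht p w Dw ∧ fw w = (if w ∈ S then c else c + 1) ∧
       pdeg C fw (if w ∈ S then c else c + 1) w = dv w ∧
       ∀ w' ∈ Dw, ∀ x ∈ C w', pdeg C fw (fw x) w' ≠ pdeg C fw (fw x) x) := by
    intro w
    by_cases hw : w ∈ C u
    · obtain ⟨D, f, hh1, hh2, hh3, hh4⟩ :=
        IH w hw (dv w) (hdvA w hw) (if w ∈ S then c else c + 1)
      exact ⟨D, f, fun _ => ⟨hh1, hh2, hh3, hh4⟩⟩
    · exact ⟨∅, fun _ => 0, fun h => absurd h hw⟩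
  choose DF fF hDF using HC
  have hDFgood : ∀ w ∈ C u, GoodD C ht p w (DF w) := fun w hw => (hDF w hw).1
  have hhtlt : ∀ w ∈ C u, ∀ x ∈ DF w, ht x < ht u := fun w hw x hx =>
    lt_of_le_of_lt ((hDFgood w hw).2.1 x hx) (hdec hw)
  have hxneu : ∀ w ∈ C u, ∀ x ∈ DF w, x ≠ u := by
    intro w hw x hx h
    exact absurd (hhtlt w hw x hx) (by rw [h]; omega)
  have hdisj : ∀ w ∈ C u, ∀ w' ∈ C u, w ≠ w' → ∀ x, x ∈ DF w → x ∈ DF w' → False := by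
    suffices H : ∀ k w w' x, w ∈ C u → w' ∈ C u → w ≠ w' → ht u - ht x ≤ k →
        x ∈ DF w → x ∈ DF w' → False by
      intro w hw w' hw' hne x h1 h2
      exact H (ht u - ht x) w w' x hw hw' hne le_rfl h1 h2
    intro k
    induction k with
    | zero =>
      intro w w' x hw hw' hne hk h1 h2
      exact absurd (hhtlt w hw x h1) (by omega)
    | succ k ihk =>
      intro w w' x hw hw' hne hk h1 h2
      by_cases hxw : x = w
      · have hxw' : x ≠ w' := by rw [hxw]; exact hne
        obtain ⟨hpx, hxC⟩ := (hDFgood w' hw').2.2.1 x h2 hxw'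
        have hpu : p x = u := by rw [hxw]; exact hp hw
        rw [hpu] at hpx
        exact absurd (hhtlt w' hw' u hpx) (by omega)
      · by_cases hxw' : x = w'
        · have hxw2 : x ≠ w := hxw
          obtain ⟨hpx, hxC⟩ := (hDFgood w hw).2.2.1 x h1 hxw2
          have hpu : p x = u := by rw [hxw']; exact hp hw'
          rw [hpu] at hpx
          exact absurd (hhtlt w hw u hpx) (by omega)
        · obtain ⟨hpx1, hxC⟩ := (hDFgood w hw).2.2.1 x h1 hxw
          obtain ⟨hpx2, _⟩ := (hDFgood w' hw').2.2.1 x h2 hxw'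
          have hlt1 : ht x < ht (p x) := hdec hxC
          have hlt2 : ht (p x) < ht u := hhtlt w hw (p x) hpx1
          exact ihk w w' (p x) hw hw' hne (by omega) hpx1 hpx2
  set f : V → Fin 2 := fun x =>
    if x = u then c else if h : ∃ w, w ∈ C u ∧ x ∈ DF w then fF h.choose x else 0
    with hf
  set D : Finset V := insert u ((C u).biUnion DF) with hD
  have hfu : f u = c := by rw [hf]; simp
  have hagree : ∀ w ∈ C u, ∀ x ∈ DF w, f x = fF w x := by
    intro w hw x hx
    have hxu : x ≠ u := hxneu w hw x hx
    have hex : ∃ w', w' ∈ C u ∧ x ∈ DF w' := ⟨w, hw, hx⟩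
    rw [hf]
    simp only [if_neg hxu, dif_pos hex]
    obtain ⟨hw0, hx0⟩ := hex.choose_spec
    by_cases he : hex.choose = w
    · rw [he]
    · exact absurd (hdisj _ hw0 _ hw he x hx0 hx) (by simp)
  have hfC : ∀ w ∈ C u, f w = (if w ∈ S then c else c + 1) := by
    intro w hw
    rw [hagree w hw w (hDFgood w hw).1]
    exact (hDF w hw).2.1
  have hfilterS : (C u).filter (fun x => f x = c) = S := by
    ext x
    simp only [Finset.mem_filter]
    constructor
    · rintro ⟨hx, hfx⟩
      by_contra hxS
      rw [hfC x hx, if_neg hxS] at hfx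
      exact fin2_succ_ne c hfx
    · intro hxS
      exact ⟨hSC hxS, by rw [hfC x (hSC hxS), if_pos hxS]⟩
  have hfilterS' : (C u).filter (fun x => f x = c + 1) = C u \ S := by
    ext x
    simp only [Finset.mem_filter, Finset.mem_sdiff]
    constructor
    · rintro ⟨hx, hfx⟩
      refine ⟨hx, fun hxS => ?_⟩
      rw [hfC x hx, if_pos hxS] at hfx
      exact fin2_succ_ne c hfx.symm
    · rintro ⟨hx, hxS⟩
      exact ⟨hx, by rw [hfC x hx, if_neg hxS]⟩
  have hpdegc : pdeg C f c u = δ := by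
    unfold pdeg
    rw [if_pos hfu, hfilterS]
    omega
  have hpdegc' : pdeg C f (c + 1) u = (C u).card + 1 - δ := by
    unfold pdeg
    rw [hfilterS', Finset.card_sdiff_of_subset hSC]
    have : ¬ (f u = c + 1) := by rw [hfu]; exact fun h => fin2_succ_ne c h.symm
    rw [if_neg this]
    have := Finset.card_le_card hSC
    omega
  have htrans : ∀ w ∈ C u, ∀ x ∈ DF w, ∀ γ, pdeg C f γ x = pdeg C (fF w) γ x := by
    intro w hw x hx γ
    unfold pdeg
    rw [hagree w hw x hx]
    congr 1
    refine congrArg Finset.card (Finset.filter_congr fun y hy => ?_)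
    rw [hagree w hw y ((hDFgood w hw).2.2.2 x hx y hy)]
  refine ⟨D, f, ⟨?_, ?_, ?_, ?_⟩, hfu, hpdegc, ?_⟩
  · rw [hD]; exact Finset.mem_insert_self u _
  · intro x hx
    rw [hD] at hx
    rcases Finset.mem_insert.1 hx with rfl | hx
    · exact le_rfl
    · obtain ⟨w, hw, hxw⟩ := Finset.mem_biUnion.1 hx
      exact le_of_lt (hhtlt w hw x hxw)
  · intro x hx hxu
    rw [hD] at hx
    rcases Finset.mem_insert.1 hx with rfl | hx
    · exact absurd rfl hxu
    · obtain ⟨w, hw, hxw⟩ := Finset.mem_biUnion.1 hx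
      by_cases hxw2 : x = w
      · subst hxw2
        refine ⟨by rw [hp hw, hD]; exact Finset.mem_insert_self u _, by rw [hp hw]; exact hw⟩
      · obtain ⟨hpx, hxC⟩ := (hDFgood w hw).2.2.1 x hxw hxw2
        exact ⟨by rw [hD]; exact Finset.mem_insert_of_mem (Finset.mem_biUnion.2 ⟨w, hw, hpx⟩),
          hxC⟩
  · intro x hx y hy
    rw [hD] at hx ⊢
    rcases Finset.mem_insert.1 hx with rfl | hx
    · exact Finset.mem_insert_of_mem
        (Finset.mem_biUnion.2 ⟨y, hy, (hDFgood y hy).1⟩)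
    · obtain ⟨w, hw, hxw⟩ := Finset.mem_biUnion.1 hx
      exact Finset.mem_insert_of_mem
        (Finset.mem_biUnion.2 ⟨w, hw, (hDFgood w hw).2.2.2 x hxw y hy⟩)
  · intro w' hw' x hx
    rw [hD] at hw'
    rcases Finset.mem_insert.1 hw' with rfl | hbi
    · -- w' = u, x ∈ C u
      have hfx := hfC x hx
      have hxself : x ∈ DF x := (hDFgood x hx).1
      have hxpd : pdeg C f (if x ∈ S then c else c + 1) x = dv x := by
        rw [htrans x hx x hxself]
        exact (hDF x hx).2.2.1
      by_cases hxS : x ∈ S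
      · rw [if_pos hxS] at hfx hxpd
        rw [hfx, hpdegc, hxpd]
        exact fun h => (hdvS x hxS) h.symm
      · rw [if_neg hxS] at hfx hxpd
        rw [hfx, hpdegc', hxpd]
        exact fun h => (hdvN x hx hxS) h.symm
    · obtain ⟨w, hw, hxw⟩ := Finset.mem_biUnion.1 hbi
      have hxDF : x ∈ DF w := (hDFgood w hw).2.2.2 w' hxw x hx
      rw [hagree w hw x hxDF, htrans w hw w' hxw _, htrans w hw x hxDF _]
      exact (hDF w hw).2.2.2 w' hxw x hx

theorem key2 (hp : ∀ ⦃u w⦄, w ∈ C u → p w = u) (u : V) {δ : ℕ}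
    (hδ : δ ∈ Aset C ht hdec u) (c : Fin 2) : Key2Concl C ht p u δ c := by
  suffices H : ∀ n u, ht u ≤ n → ∀ δ ∈ Aset C ht hdec u, ∀ c : Fin 2,
      Key2Concl C ht p u δ c from H (ht u) u le_rfl δ hδ c
  intro n
  induction n with
  | zero =>
    exact fun u hu δ hδ c =>
      key2_step hp u (fun w hw => absurd (hdec hw) (by omega)) hδ c
  | succ n ih =>
    exact fun u hu δ hδ c =>
      key2_step hp u (fun w hw => ih w (by have := hdec hw; omega)) hδ c

theorem pdeg_le (C : V → Finset V) (f : V → Fin 2) (γ : Fin 2) (x : V) :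
    pdeg C f γ x ≤ (C x).card + 1 := by
  unfold pdeg
  have := Finset.card_filter_le (C x) (fun y => f y = γ)
  split_ifs <;> omega

end Abstract

end LocIrrAux

open LocIrrAux SimpleGraph

/-- The number of edges of color `c` incident to vertex `v` under edge coloring `φ`
(the `c`-degree of `v`). -/
noncomputable def colorDeg {V α : Type*} (G : SimpleGraph V)
    (φ : Sym2 V → α) (c : α) (v : V) : ℕ :=
  Nat.card {w : V // G.Adj v w ∧ φ s(v, w) = c}

/-- An edge coloring of `G` is locally irregular if within every color class the
endpoints of each edge have distinct degrees (isolated vertices are irrelevant). -/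
def IsLocIrrColoring {V α : Type*} (G : SimpleGraph V) (φ : Sym2 V → α) : Prop :=
  ∀ ⦃v w : V⦄, G.Adj v w →
    colorDeg G φ (φ s(v, w)) v ≠ colorDeg G φ (φ s(v, w)) w

/-- If T is a tree whose locally irregular chromatic index equals 3 (it admits a
locally irregular 3-edge coloring but no 2-edge one), then every vertex of
maximum degree in T has a neighbor of the same maximum degree. -/
theorem tree_index_three_max_degree_pairs {V : Type*} [Fintype V] [DecidableEq V]
    (G : SimpleGraph V) [DecidableRel G.Adj] (hT : G.IsTree)
    (h3 : ∃ φ : Sym2 V → Fin 3, IsLocIrrColoring G φ)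
    (h2 : ¬ ∃ φ : Sym2 V → Fin 2, IsLocIrrColoring G φ) :
    ∀ v : V, G.degree v = G.maxDegree →
      ∃ w : V, G.Adj v w ∧ G.degree w = G.degree v := by
  classical
  intro v hvmax
  by_contra hno
  push_neg at hno
  refine absurd ?_ h2
  -- set-up : parent function and children structure rooted at v
  set d : V → ℕ := fun x => G.dist v x with hd
  have hpar : ∀ w : V, ∃ u, w ≠ v → (G.Adj w u ∧ d u + 1 = d w) := by
    intro w
    by_cases h : w = v
    · exact ⟨v, fun hc => absurd h hc⟩
    · obtain ⟨u, h1, h2'⟩ := parent_exists hT h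
      exact ⟨u, fun _ => ⟨h1, h2'⟩⟩
  choose p hp using hpar
  set C : V → Finset V := fun u => Finset.univ.filter (fun x => p x = u ∧ x ≠ v) with hC
  set htm : V → ℕ := fun u => Fintype.card V - d u with hht
  have hpadj : ∀ w, w ≠ v → G.Adj w (p w) := fun w h => (hp w h).1
  have hpd : ∀ w, w ≠ v → d (p w) + 1 = d w := fun w h => (hp w h).2
  have hCmem : ∀ {u x}, x ∈ C u ↔ (p x = u ∧ x ≠ v) := by
    intro u x; rw [hC]; simp
  have hp' : ∀ ⦃u w⦄, w ∈ C u → p w = u := fun u w hw => (hCmem.1 hw).1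
  have hCd : ∀ {u x}, x ∈ C u → d x = d u + 1 := by
    intro u x hx
    obtain ⟨hpx, hxv⟩ := hCmem.1 hx
    have := hpd x hxv
    rw [hpx] at this
    omega
  have hdvzero : d v = 0 := by rw [hd]; exact SimpleGraph.dist_self
  have hdec : ∀ ⦃u w⦄, w ∈ C u → htm w < htm u := by
    intro u w hw
    have h1 := hCd hw
    have h2 := dist_lt_card hT v w
    rw [hht]
    simp only [← hd] at h2 ⊢
    omega
  -- edge orientation facts
  have hedge : ∀ {x y}, G.Adj x y → d y + 1 = d x → x ∈ C y := by
    intro x y hadj hdxy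
    have hxv : x ≠ v := by
      intro h
      rw [h, hdvzero] at hdxy
      omega
    have := parent_unique hT hadj hdxy (hpadj x hxv) (hpd x hxv)
    exact hCmem.2 ⟨this.symm, hxv⟩
  have tri : ∀ {x y : V}, G.Adj x y → d y ≤ d x + 1 := by
    intro x y hadj
    obtain ⟨pw, hpw⟩ := hT.isConnected.exists_walk_length_eq_dist v x
    have := SimpleGraph.dist_le (pw.concat hadj)
    rw [Walk.length_concat, hpw] at this
    exact this
  have hadj_cases : ∀ {x y}, G.Adj x y → x ∈ C y ∨ y ∈ C x := by
    intro x y hadj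
    have hne : d x ≠ d y := level hT v hadj
    have h1 := tri hadj
    have h2 := tri hadj.symm
    rcases (by omega : d y + 1 = d x ∨ d x + 1 = d y) with h | h
    · exact Or.inl (hedge hadj h)
    · exact Or.inr (hedge hadj.symm h)
  -- neighborhood decomposition
  have hnbhd : ∀ {u}, u ≠ v → G.neighborFinset u = insert (p u) (C u) := by
    intro u hu
    ext x
    rw [SimpleGraph.mem_neighborFinset, Finset.mem_insert]
    constructor
    · intro hadj
      rcases hadj_cases hadj with h | h
      · exact Or.inl (hp' h).symm
      · exact Or.inr h
    · rintro (rfl | hx)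
      · exact hpadj u hu
      · obtain ⟨hpx, hxv⟩ := hCmem.1 hx
        have := hpadj x hxv
        rw [hpx] at this
        exact this.symm
  have hpnotC : ∀ {u}, u ≠ v → p u ∉ C u := by
    intro u hu hmem
    have h1 := hCd hmem
    have h2 := hpd u hu
    omega
  have hdeg : ∀ {u}, u ≠ v → G.degree u = (C u).card + 1 := by
    intro u hu
    rw [← SimpleGraph.card_neighborFinset_eq_degree, hnbhd hu,
      Finset.card_insert_of_notMem (hpnotC hu)]
  have hnbhdv : G.neighborFinset v = C v := by
    ext x
    rw [SimpleGraph.mem_neighborFinset]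
    constructor
    · intro hadj
      rcases hadj_cases hadj with h | h
      · exact absurd (hCmem.1 h).2 (by simp)
      · exact h
    · intro hx
      obtain ⟨hpx, hxv⟩ := hCmem.1 hx
      have := hpadj x hxv
      rw [hpx] at this
      exact this.symm
  have hdegv : G.degree v = (C v).card := by
    rw [← SimpleGraph.card_neighborFinset_eq_degree, hnbhdv]
  have hchild : ∀ {w}, w ∈ C v → G.degree w < G.degree v := by
    intro w hw
    have hadj : G.Adj v w := by
      rw [← SimpleGraph.mem_neighborFinset, hnbhdv]; exact hw
    exact lt_of_le_of_ne (hvmax ▸ G.degree_le_maxDegree w) (hno w hadj)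
  -- the root value is achievable
  have hdvch : ∀ w : V, ∃ x : ℕ, w ∈ C v → x ∈ Aset C htm hdec w := by
    intro w
    by_cases hw : w ∈ C v
    · obtain ⟨x, hx⟩ := inv_nonempty (key1 (C := C) (ht := htm) (hdec := hdec) w)
      exact ⟨x, fun _ => hx⟩
    · exact ⟨0, fun h => absurd h hw⟩
  choose dv hdv using hdvch
  have hAle : ∀ {w δ}, δ ∈ Aset C htm hdec w → δ ≤ (C w).card + 1 := by
    intro w δ hδ
    rw [Aset_eq] at hδ
    exact hδ.2.1
  have hδv : (C v).card + 1 ∈ Aset C htm hdec v := by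
    rw [Aset_eq]
    refine ⟨by omega, le_rfl, C v, subset_rfl, rfl, dv, fun w hw => hdv w hw, ?_, ?_⟩
    · intro w hw
      have hb := hAle (hdv w hw)
      have hd1 := hdeg (hCmem.1 hw).2
      have hd2 := hchild hw
      omega
    · intro w hw hws
      exact absurd hw hws
  obtain ⟨D, f, hgood, hfv, hpdegv, hirr⟩ :=
    key2 (C := C) (ht := htm) (hdec := hdec) hp' v hδv 0
  -- coverage : D is everything
  have hcov : ∀ x : V, x ∈ D := by
    suffices H : ∀ n x, d x ≤ n → x ∈ D by intro x; exact H (d x) x le_rfl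
    intro n
    induction n with
    | zero =>
      intro x hx
      have hdx : d x = 0 := by omega
      simp only [hd] at hdx
      have : v = x := (hT.isConnected.dist_eq_zero_iff).1 hdx
      rw [← this]; exact hgood.1
    | succ n ih =>
      intro x hx
      by_cases hxv : x = v
      · rw [hxv]; exact hgood.1
      · have hxC : x ∈ C (p x) := hCmem.2 ⟨rfl, hxv⟩
        have hpx : p x ∈ D := by
          apply ih
          have := hpd x hxv
          omega
        exact hgood.2.2.2 (p x) hpx x hxC
  -- all root edges are colored 0
  have hf0 : ∀ w ∈ C v, f w = 0 := by
    have hcard : ((C v).filter (fun x => f x = 0)).card = (C v).card := by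
      have : pdeg C f 0 v = (C v).card + 1 := hpdegv
      unfold pdeg at this
      rw [if_pos hfv] at this
      omega
    have heq : (C v).filter (fun x => f x = 0) = C v :=
      Finset.eq_of_subset_of_card_le (Finset.filter_subset _ _) (by omega)
    intro w hw
    have hmem : w ∈ (C v).filter (fun x => f x = 0) := by rw [heq]; exact hw
    exact (Finset.mem_filter.1 hmem).2
  -- the coloring
  set φ : Sym2 V → Fin 2 := Sym2.lift
    ⟨fun x y => if d x < d y then f y else if d y < d x then f x else 0, by
      intro x y
      dsimp only
      rcases lt_trichotomy (d x) (d y) with h | h | h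
      · rw [if_pos h, if_neg (by omega), if_pos h]
      · rw [if_neg (by omega), if_neg (by omega), if_neg (by omega), if_neg (by omega)]
      · rw [if_neg (by omega), if_pos h, if_pos h]⟩ with hφ
  have hφchild : ∀ {a b}, b ∈ C a → φ s(a, b) = f b := by
    intro a b hb
    have hdb := hCd hb
    rw [hφ, Sym2.lift_mk]
    dsimp only
    rw [if_pos (by omega)]
  -- colorDeg in terms of pdeg
  have hcdF : ∀ (γ : Fin 2) (w : V), colorDeg G φ γ w =
      ((G.neighborFinset w).filter (fun x => φ s(w, x) = γ)).card := by
    intro γ w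
    rw [colorDeg, Nat.card_eq_fintype_card, Fintype.card_subtype]
    congr 1
    ext x
    simp [SimpleGraph.mem_neighborFinset]
  have hcd : ∀ (γ : Fin 2) (w : V), w ≠ v → colorDeg G φ γ w = pdeg C f γ w := by
    intro γ w hw
    rw [hcdF, hnbhd hw]
    have hpw : φ s(w, p w) = f w := by
      rw [Sym2.eq_swap]
      exact hφchild (hCmem.2 ⟨rfl, hw⟩)
    have hfilt : (C w).filter (fun x => φ s(w, x) = γ) = (C w).filter (fun x => f x = γ) :=
      Finset.filter_congr (fun x hx => by rw [hφchild hx])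
    rw [Finset.filter_insert]
    unfold pdeg
    by_cases hc : f w = γ
    · rw [if_pos (by rw [hpw]; exact hc), if_pos hc,
        Finset.card_insert_of_notMem (fun hmem => hpnotC hw (Finset.filter_subset _ _ hmem)),
        hfilt]
      omega
    · rw [if_neg (by rw [hpw]; exact hc), if_neg hc, hfilt]
      omega
  have hcdv : ∀ γ : Fin 2, colorDeg G φ γ v = ((C v).filter (fun x => f x = γ)).card := by
    intro γ
    rw [hcdF, hnbhdv]
    exact congrArg Finset.card (Finset.filter_congr (fun x hx => by rw [hφchild hx]))
  have hcdv0 : colorDeg G φ 0 v = G.degree v := by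
    rw [hcdv, hdegv]
    congr 1
    exact Finset.filter_true_of_mem hf0
  refine ⟨φ, ?_⟩
  have core : ∀ {a b : V}, G.Adj a b → b ∈ C a →
      colorDeg G φ (φ s(a, b)) a ≠ colorDeg G φ (φ s(a, b)) b := by
    intro a b hadj hb
    have hbv : b ≠ v := (hCmem.1 hb).2
    rw [hφchild hb]
    by_cases hav : a = v
    · subst hav
      have hfb : f b = 0 := hf0 b hb
      rw [hfb, hcdv0, hcd 0 b hbv]
      have h1 : pdeg C f 0 b ≤ (C b).card + 1 := pdeg_le C f 0 b
      have h2 := hdeg hbv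
      have h3 := hchild hb
      omega
    · rw [hcd _ a hav, hcd _ b hbv]
      exact hirr a (hcov a) b hb
  intro a b hadj
  rcases hadj_cases hadj with h | h
  · have hcore := core hadj.symm h
    rw [show s(a, b) = s(b, a) from Sym2.eq_swap]
    exact hcore.symm
  · exact core hadj h
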